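/- The substitution σ on {a,b,c} given by σ(a) = a*b, σ(b) = a*c*b, σ(c) = a*c*c satisfies: I_{a⁻¹} ∘ σ equals the composition π ∘ g₁ ∘ g₂ ∘ g₂ ∘ g₃, where π(a)=b, π(b)=c, π(c)=a; g₁(a)=a*c, g₁(b)=b, g₁(c)=c; g₂(a)=a, g₂(b)=b, g₂(c)=b*c; g₃(a)=a, g₃(b)=b*a, g₃(c)=c (as endomorphisms of the free group on {a,b,c}). -/
import Mathlib


/-- for σ = (ab, acb, acc), I_{a⁻¹} ∘ σ = π ∘ g₁ ∘ g₂ ∘ g₂ ∘ g₃ where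
π = (b,c,a), g₁ = (ac,b,c), g₂ = (a,b,bc), g₃ = (a,ba,c). -/
theorem stmt_14
    (a b c : FreeGroup (Fin 3))
    (ha : a = FreeGroup.of 0) (hb : b = FreeGroup.of 1) (hc : c = FreeGroup.of 2)
    (σ π g₁ g₂ g₃ : FreeGroup (Fin 3) →* FreeGroup (Fin 3))
    (hσ : σ = FreeGroup.lift ![a * b, a * c * b, a * c * c])
    (hπ : π = FreeGroup.lift ![b, c, a])
    (hg₁ : g₁ = FreeGroup.lift ![a * c, b, c])
    (hg₂ : g₂ = FreeGroup.lift ![a, b, b * c])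
    (hg₃ : g₃ = FreeGroup.lift ![a, b * a, c]) :
    ∀ u : FreeGroup (Fin 3),
      a⁻¹ * σ u * (a⁻¹)⁻¹ = (π.comp (g₁.comp (g₂.comp (g₂.comp g₃)))) u := by
  have key : ((MulAut.conj a⁻¹).toMonoidHom.comp σ : FreeGroup (Fin 3) →* FreeGroup (Fin 3))
      = π.comp (g₁.comp (g₂.comp (g₂.comp g₃))) := by
    apply FreeGroup.ext_hom
    intro i
    fin_cases i <;>
      simp [hσ, hπ, hg₁, hg₂, hg₃, ha, hb, hc, mul_assoc]
  intro u
  have := DFunLike.congr_fun key u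
  simpa using this
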